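/- Let Σ', Σ ⊆ ℝⁿ be open convex cones with vertex at 0 such that the closure of Σ' ∩ ∂B₁ is a compact subset of Σ ∩ ∂B₁ (where ∂B₁ is the unit sphere). Let v : Σ → [0,∞) be a nonnegative, concave, positively 1-homogeneous function (v(tx) = t v(x) for x ∈ Σ, t > 0). Then there exists a concave, positively 1-homogeneous function ṽ : cl(Σ) → ℝ such that ṽ = 0 on ∂Σ and ṽ = v on Σ'. -/

import Mathlib

open Metric Set Pointwise

noncomputable section

abbrev Euc (n : ℕ) := EuclideanSpace ℝ (Fin n)

def IsOpenConvexCone {n : ℕ} (S : Set (Euc n)) : Prop :=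
  IsOpen S ∧ Convex ℝ S ∧ ∀ x ∈ S, ∀ t : ℝ, 0 < t → t • x ∈ S

lemma exists_supergrad {n : ℕ} {S : Set (Euc n)} (hSo : IsOpen S)
    (hScone : ∀ x ∈ S, ∀ t : ℝ, 0 < t → t • x ∈ S) {v : Euc n → ℝ}
    (hvconc : ConcaveOn ℝ S v)
    (hvhom : ∀ x ∈ S, ∀ t : ℝ, 0 < t → v (t • x) = t * v x)
    {x : Euc n} (hx : x ∈ S) :
    ∃ ℓ : Euc n →L[ℝ] ℝ, (∀ y ∈ S, v y ≤ ℓ y) ∧ ℓ x = v x := by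
  have hvcont : ContinuousOn v S := hvconc.continuousOn hSo
  set C : Set (Euc n × ℝ) := {p | p.1 ∈ S ∧ p.2 < v p.1} with hC
  have hCo : IsOpen C := by
    rw [isOpen_iff_mem_nhds]
    rintro ⟨y, t⟩ ⟨hy, ht⟩
    have h1 : ContinuousAt v y := hvcont.continuousAt (hSo.mem_nhds hy)
    have h2 : ContinuousAt (fun p : Euc n × ℝ => v p.1 - p.2) (y, t) :=
      (h1.comp continuousAt_fst).sub continuousAt_snd
    have hA : (fun p : Euc n × ℝ => v p.1 - p.2) ⁻¹' Ioi 0 ∈ nhds ((y, t) : Euc n × ℝ) :=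
      h2.preimage_mem_nhds (Ioi_mem_nhds (by simpa using sub_pos.2 ht))
    have hB : (Prod.fst ⁻¹' S : Set (Euc n × ℝ)) ∈ nhds ((y, t) : Euc n × ℝ) :=
      (hSo.preimage continuous_fst).mem_nhds hy
    filter_upwards [hA, hB] with p hp1 hp2
    have hp1' : 0 < v p.1 - p.2 := hp1
    exact ⟨hp2, by linarith⟩
  have hCc : Convex ℝ C := by
    rintro ⟨y1, t1⟩ ⟨h1, h1'⟩ ⟨y2, t2⟩ ⟨h2, h2'⟩ a b ha hb hab
    refine ⟨hvconc.1 h1 h2 ha hb hab, ?_⟩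
    have hcomb := hvconc.2 h1 h2 ha hb hab
    simp only [smul_eq_mul] at hcomb ⊢
    dsimp at h1' h2' ⊢
    rcases eq_or_lt_of_le ha with h | h
    · have hb1 : b = 1 := by linarith
      simp only [← h, hb1]; simpa using h2'
    · have e1 : a * t1 < a * v y1 := mul_lt_mul_of_pos_left h1' h
      have e2 : b * t2 ≤ b * v y2 := mul_le_mul_of_nonneg_left h2'.le hb
      linarith
  have disj : ((x, v x) : Euc n × ℝ) ∉ C := fun h => lt_irrefl _ h.2
  obtain ⟨f, hf⟩ := geometric_hahn_banach_open_point hCc hCo disj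
  set a : ℝ := f ((0 : Euc n), (1 : ℝ)) with ha
  have hsplit : ∀ (y : Euc n) (t : ℝ), f (y, t) = f (y, 0) + t * a := by
    intro y t
    have : ((y, t) : Euc n × ℝ) = (y, (0:ℝ)) + t • ((0 : Euc n), (1:ℝ)) := by
      simp [Prod.ext_iff]
    rw [this, map_add, map_smul, smul_eq_mul]
  have hapos : 0 < a := by
    have h1 := hf (x, v x - 1) ⟨hx, by dsimp; linarith⟩
    rw [hsplit x (v x - 1), hsplit x (v x)] at h1
    nlinarith
  have key : ∀ y ∈ S, f (y, 0) + v y * a ≤ f (x, 0) + v x * a := by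
    intro y hy
    by_contra hcon
    push_neg at hcon
    set ε : ℝ := (f (y, 0) + v y * a - (f (x, 0) + v x * a)) / a with hε
    have hεpos : 0 < ε := div_pos (by linarith) hapos
    have h1 := hf (y, v y - ε) ⟨hy, by dsimp; linarith⟩
    rw [hsplit y (v y - ε), hsplit x (v x)] at h1
    have : ε * a = f (y, 0) + v y * a - (f (x, 0) + v x * a) := by
      rw [hε]; field_simp
    nlinarith
  have hc0 : f (x, 0) + v x * a = 0 := by
    have h2 : ∀ t : ℝ, 0 < t → t * (f (x, 0) + v x * a) ≤ f (x, 0) + v x * a := by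
      intro t ht
      have hk := key (t • x) (hScone x hx t ht)
      have e1 : f (t • x, (0:ℝ)) = t * f (x, 0) := by
        have : ((t • x, (0:ℝ)) : Euc n × ℝ) = t • ((x, (0:ℝ)) : Euc n × ℝ) := by
          simp [Prod.ext_iff]
        rw [this, map_smul, smul_eq_mul]
      rw [e1, hvhom x hx t ht] at hk
      nlinarith
    have ha2 := h2 2 (by norm_num)
    have ha3 := h2 (1/2) (by norm_num)
    linarith
  refine ⟨(-(a⁻¹)) • f.comp (ContinuousLinearMap.inl ℝ (Euc n) ℝ), ?_, ?_⟩
  · intro y hy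
    have hk := key y hy
    have h1 : v y * a ≤ - f (y, 0) := by linarith
    simp only [ContinuousLinearMap.smul_apply, ContinuousLinearMap.comp_apply,
      ContinuousLinearMap.inl_apply, smul_eq_mul]
    have h2 : a⁻¹ * (v y * a) ≤ a⁻¹ * (-f (y, 0)) :=
      mul_le_mul_of_nonneg_left h1 (inv_nonneg.2 hapos.le)
    rw [show a⁻¹ * (v y * a) = v y by field_simp] at h2
    linarith
  · have hfx : f (x, 0) = - (v x * a) := by linarith
    simp only [ContinuousLinearMap.smul_apply, ContinuousLinearMap.comp_apply,
      ContinuousLinearMap.inl_apply, smul_eq_mul, hfx]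
    field_simp

/-- Extension of a nonnegative concave `1`-homogeneous function on a cone `Σ` to a
concave `1`-homogeneous function on `cl Σ` vanishing on `∂Σ` and agreeing with the
original function on a subcone `Σ'` whose spherical section is compactly contained
in that of `Σ`. -/
theorem stmt_19 {n : ℕ} (S' S : Set (Euc n))
    (hS' : IsOpenConvexCone S') (hS : IsOpenConvexCone S)
    (hcomp : IsCompact (closure (S' ∩ sphere (0 : Euc n) 1)))
    (hsub : closure (S' ∩ sphere (0 : Euc n) 1) ⊆ S ∩ sphere (0 : Euc n) 1)
    (v : Euc n → ℝ) (hv0 : ∀ x ∈ S, 0 ≤ v x)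
    (hvconc : ConcaveOn ℝ S v)
    (hvhom : ∀ x ∈ S, ∀ t : ℝ, 0 < t → v (t • x) = t * v x) :
    ∃ vt : Euc n → ℝ, ConcaveOn ℝ (closure S) vt ∧
      (∀ x ∈ closure S, ∀ t : ℝ, 0 < t → vt (t • x) = t * vt x) ∧
      (∀ x ∈ frontier S, vt x = 0) ∧
      (∀ x ∈ S', vt x = v x) := by
  obtain ⟨hSo, hSc, hScone⟩ := hS
  obtain ⟨hS'o, hS'c, hS'cone⟩ := hS'
  rcases S.eq_empty_or_nonempty with hSe | ⟨x₀, hx₀⟩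
  · subst hSe
    exact ⟨v, by simp [ConcaveOn, convex_empty], by simp, by simp, fun x _ => rfl⟩
  have hvcont : ContinuousOn v S := hvconc.continuousOn hSo
  -- membership of unit rescalings
  have hunit : ∀ y ∈ S', y ≠ 0 → (‖y‖⁻¹ • y) ∈ closure (S' ∩ sphere (0 : Euc n) 1) := by
    intro y hy hy0
    have hny : 0 < ‖y‖ := norm_pos_iff.mpr hy0
    refine subset_closure ⟨hS'cone y hy _ (inv_pos.mpr hny), ?_⟩
    simp [norm_smul, abs_of_pos (inv_pos.mpr hny), inv_mul_cancel₀ hny.ne']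
  -- S' ⊆ S
  have hsub' : S' ⊆ S := by
    intro y hy
    by_cases hy0 : y = 0
    · subst hy0
      rcases Nat.eq_zero_or_pos n with hn | hn
      · subst hn
        have : (0 : Euc 0) = x₀ := by ext i; exact i.elim0
        rwa [this]
      · set e : Euc n := EuclideanSpace.single (⟨0, hn⟩ : Fin n) (1 : ℝ) with he
        have hne : ‖e‖ = 1 := by simp [he, EuclideanSpace.norm_single]
        obtain ⟨ε, hε, hball⟩ := Metric.isOpen_iff.mp hS'o 0 hy
        have hmem : ∀ z : Euc n, ‖z‖ = 1 → z ∈ S' := by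
          intro z hz
          have h1 : (ε / 2) • z ∈ S' := by
            apply hball
            rw [mem_ball, dist_zero_right, norm_smul, hz, mul_one, Real.norm_eq_abs,
              abs_of_pos (by linarith : (0:ℝ) < ε / 2)]
            linarith
          have h2 := hS'cone _ h1 (2 / ε) (by positivity)
          rwa [smul_smul, show (2 / ε) * (ε / 2) = 1 by field_simp, one_smul] at h2
        have hmemS : ∀ z : Euc n, ‖z‖ = 1 → z ∈ S := by
          intro z hz
          exact (hsub (subset_closure ⟨hmem z hz, mem_sphere_zero_iff_norm.mpr hz⟩)).1
        have h0 : (0 : Euc n) = (1/2 : ℝ) • e + (1/2 : ℝ) • (-e) := by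
          rw [smul_neg]; abel
        rw [h0]
        exact hSc (hmemS e hne) (hmemS (-e) (by rw [norm_neg, hne])) (by norm_num)
          (by norm_num) (by norm_num)
    · have hu := hsub (hunit y hy hy0)
      have := hScone _ hu.1 ‖y‖ (norm_pos_iff.mpr hy0)
      rwa [smul_inv_smul₀ (norm_ne_zero_iff.mpr hy0)] at this
  -- v vanishes at 0 whenever 0 ∈ S
  have hv00 : (0 : Euc n) ∈ S → v 0 = 0 := by
    intro h0
    have := hvhom 0 h0 2 (by norm_num)
    rw [smul_zero] at this; linarith
  -- the family of linear functionals
  set L : Set (Euc n →L[ℝ] ℝ) :=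
    {ℓ | (∀ y ∈ S, 0 ≤ ℓ y) ∧ ∀ y ∈ S', v y ≤ ℓ y} with hL
  set A : Euc n → Set ℝ := fun x => (fun ℓ : Euc n →L[ℝ] ℝ => ℓ x) '' L with hA
  set vt : Euc n → ℝ := fun x => sInf (A x) with hvt
  have hLne : L.Nonempty := by
    obtain ⟨ℓ₀, hℓ₀, -⟩ := exists_supergrad hSo hScone hvconc hvhom hx₀
    exact ⟨ℓ₀, fun y hy => le_trans (hv0 y hy) (hℓ₀ y hy),
      fun y hy => hℓ₀ y (hsub' hy)⟩
  have hAne : ∀ x, (A x).Nonempty := fun x => hLne.image _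
  have hlb : ∀ x ∈ closure S, ∀ r ∈ A x, (0:ℝ) ≤ r := by
    rintro x hx r ⟨ℓ, hℓ, rfl⟩
    have hcl : closure S ⊆ {y | 0 ≤ ℓ y} :=
      closure_minimal (fun y hy => hℓ.1 y hy)
        (isClosed_le continuous_const ℓ.continuous)
    exact hcl hx
  have hbdd : ∀ x ∈ closure S, BddBelow (A x) :=
    fun x hx => ⟨0, fun r hr => hlb x hx r hr⟩
  refine ⟨vt, ⟨hSc.closure, ?_⟩, ?_, ?_, ?_⟩
  · -- concavity
    intro x hx y hy a b ha hb hab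
    apply le_csInf (hAne _)
    rintro r ⟨ℓ, hℓ, rfl⟩
    have h1 : vt x ≤ ℓ x := csInf_le (hbdd x hx) ⟨ℓ, hℓ, rfl⟩
    have h2 : vt y ≤ ℓ y := csInf_le (hbdd y hy) ⟨ℓ, hℓ, rfl⟩
    have h3 : ℓ (a • x + b • y) = a * ℓ x + b * ℓ y := by
      rw [map_add, map_smul, map_smul]; rfl
    show a • vt x + b • vt y ≤ ℓ (a • x + b • y)
    rw [h3]
    simp only [smul_eq_mul]
    have e1 : a * vt x ≤ a * ℓ x := mul_le_mul_of_nonneg_left h1 ha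
    have e2 : b * vt y ≤ b * ℓ y := mul_le_mul_of_nonneg_left h2 hb
    linarith
  · -- homogeneity
    intro x _ t ht
    have hAs : A (t • x) = t • A x := by
      ext r
      constructor
      · rintro ⟨ℓ, hℓ, rfl⟩
        exact ⟨ℓ x, ⟨ℓ, hℓ, rfl⟩, (map_smul ℓ t x).symm⟩
      · rintro ⟨s, ⟨ℓ, hℓ, rfl⟩, rfl⟩
        exact ⟨ℓ, hℓ, map_smul ℓ t x⟩
    show sInf (A (t • x)) = t * sInf (A x)
    rw [hAs, Real.sInf_smul_of_nonneg ht.le, smul_eq_mul]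
  · -- frontier
    intro x hx
    rw [hSo.frontier_eq] at hx
    obtain ⟨hxc, hxn⟩ := hx
    have hge : (0:ℝ) ≤ vt x := le_csInf (hAne x) (fun r hr => hlb x hxc r hr)
    have hle : vt x ≤ 0 := by
      obtain ⟨f, hf⟩ := geometric_hahn_banach_open_point hSc hSo hxn
      have h1 : ∀ y ∈ S, f y ≤ 0 := by
        intro y hy
        by_contra hpos
        push_neg at hpos
        set t : ℝ := (|f x| + 1) / f y with htdef
        have ht : 0 < t := by positivity
        have := hf (t • y) (hScone y hy t ht)
        rw [map_smul, smul_eq_mul, htdef, div_mul_cancel₀ _ hpos.ne'] at this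
        have := le_abs_self (f x)
        linarith
      have hfx0 : f x = 0 := by
        have hxle : f x ≤ 0 := by
          have hcl : closure S ⊆ {y | f y ≤ 0} :=
            closure_minimal (fun y hy => h1 y hy)
              (isClosed_le f.continuous continuous_const)
          exact hcl hxc
        rcases eq_or_lt_of_le hxle with h | h
        · exact h
        · exfalso
          have hx₀lt : f x₀ < f x := hf x₀ hx₀
          have hx₀neg : f x₀ < 0 := lt_trans hx₀lt h
          set t : ℝ := f x / (2 * f x₀) with htdef
          have ht : 0 < t := div_pos_of_neg_of_neg h (by linarith)
          have hmem := hf (t • x₀) (hScone x₀ hx₀ t ht)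
          rw [map_smul, smul_eq_mul, htdef] at hmem
          have : f x / (2 * f x₀) * f x₀ = f x / 2 := by
            field_simp
            exact mul_div_cancel_right₀ _ hx₀neg.ne
          rw [this] at hmem
          linarith
      -- exhibit ℓ ∈ L with ℓ x ≤ 0
      have hfneg : ∀ y ∈ S, f y < 0 := fun y hy => hfx0 ▸ hf y hy
      rcases (closure (S' ∩ sphere (0 : Euc n) 1)).eq_empty_or_nonempty with hKe | hKne
      · have h0L : (0 : Euc n →L[ℝ] ℝ) ∈ L := by
          constructor
          · intro y _; simp
          · intro y hy
            by_cases hy0 : y = 0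
            · subst hy0
              simp [hv00 (hsub' hy)]
            · exact absurd (hKe ▸ hunit y hy hy0) (notMem_empty _)
        have := csInf_le (hbdd x hxc) (⟨0, h0L, rfl⟩ : (0:ℝ) ∈ A x)
        simpa using this
      · set K := closure (S' ∩ sphere (0 : Euc n) 1) with hK
        have hKS : K ⊆ S := fun z hz => (hsub hz).1
        obtain ⟨z₀, hz₀K, hz₀min⟩ := hcomp.exists_isMinOn hKne
          ((f.continuous.neg).continuousOn)
        obtain ⟨w₀, hw₀K, hw₀max⟩ := hcomp.exists_isMaxOn hKne (hvcont.mono hKS)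
        set δ : ℝ := -f z₀ with hδ
        have hδpos : 0 < δ := by
          have := hfneg z₀ (hKS hz₀K); simp [hδ]; linarith
        set M : ℝ := v w₀ with hM
        have hM0 : 0 ≤ M := hv0 w₀ (hKS hw₀K)
        set c : ℝ := M / δ with hc
        have hc0 : 0 ≤ c := div_nonneg hM0 hδpos.le
        have hKbound : ∀ u ∈ K, v u ≤ c * (-f u) := by
          intro u hu
          have h3 : δ ≤ -f u := hz₀min hu
          have h4 : v u ≤ M := hw₀max hu
          calc v u ≤ M := h4
            _ = c * δ := by rw [hc]; field_simp
            _ ≤ c * (-f u) := mul_le_mul_of_nonneg_left h3 hc0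
        have hℓL : c • (-f) ∈ L := by
          constructor
          · intro y hy
            have := hfneg y hy
            simp only [ContinuousLinearMap.smul_apply, ContinuousLinearMap.neg_apply,
              smul_eq_mul]
            exact mul_nonneg hc0 (by linarith)
          · intro y hy
            by_cases hy0 : y = 0
            · subst hy0
              simp [hv00 (hsub' hy)]
            · have hny : 0 < ‖y‖ := norm_pos_iff.mpr hy0
              have huK := hunit y hy hy0
              have hb := hKbound _ huK
              have huS : ‖y‖⁻¹ • y ∈ S := hKS huK
              have hvy : v y = ‖y‖ * v (‖y‖⁻¹ • y) := by
                have := hvhom _ huS ‖y‖ hny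
                rwa [smul_inv_smul₀ hny.ne'] at this
              simp only [ContinuousLinearMap.smul_apply, ContinuousLinearMap.neg_apply,
                smul_eq_mul]
              have hfy : f y = ‖y‖ * f (‖y‖⁻¹ • y) := by
                conv_lhs => rw [← smul_inv_smul₀ hny.ne' y]
                rw [map_smul, smul_eq_mul]
              rw [hvy, hfy]
              calc ‖y‖ * v (‖y‖⁻¹ • y) ≤ ‖y‖ * (c * (-f (‖y‖⁻¹ • y))) :=
                    mul_le_mul_of_nonneg_left hb hny.le
                _ = c * -(‖y‖ * f (‖y‖⁻¹ • y)) := by ring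
        have := csInf_le (hbdd x hxc) (⟨c • (-f), hℓL, rfl⟩ :
          (c • (-f) : Euc n →L[ℝ] ℝ) x ∈ A x)
        have hval : (c • (-f) : Euc n →L[ℝ] ℝ) x = 0 := by
          simp [hfx0]
        rw [hval] at this
        exact this
    linarith
  · -- agreement on S'
    intro x hxS'
    have hxS : x ∈ S := hsub' hxS'
    have hge : v x ≤ vt x := by
      apply le_csInf (hAne x)
      rintro r ⟨ℓ, hℓ, rfl⟩
      exact hℓ.2 x hxS'
    have hle : vt x ≤ v x := by
      obtain ⟨ℓ, hℓ, hℓx⟩ := exists_supergrad hSo hScone hvconc hvhom hxS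
      have hℓL : ℓ ∈ L := ⟨fun y hy => le_trans (hv0 y hy) (hℓ y hy),
        fun y hy => hℓ y (hsub' hy)⟩
      have h5 : sInf (A x) ≤ ℓ x := csInf_le (hbdd x (subset_closure hxS)) ⟨ℓ, hℓL, rfl⟩
      show sInf (A x) ≤ v x
      rwa [hℓx] at h5
    linarith
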